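/- Let λ ∈ ℝ, let μ be any (σ-finite) measure on ℝ, and let H_μ = L²(ℝ×ℝ*, μ ⊗ |η₁|⁻¹dη₁) be the Hilbert space of square-integrable functions on ℝ×(ℝ\{0}) with respect to the product of μ (in the variable η₀) and the measure with density |η₁|⁻¹ (in the variable η₁). For p = (p₀,p₁) ∈ ℝ² define (π(p)ψ)(η₀,η₁) = e^{i(p₀η₀ + p₁η₁)}·ψ(η₀, η₁e^{λp₀}). Then each π(p) is a unitary operator on H_μ, and π is a unitary representation of the group G = (ℝ², ∔): π(p)π(p') = π(p₀+p'₀, p₁+p'₁e^{λp₀}) for all p, p' ∈ ℝ². -/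

import Mathlib

open MeasureTheory

/-- The dilation-invariant measure `|η₁|⁻¹dη₁` on `ℝ* = ℝ \ {0}`. -/
noncomputable def nuStar : Measure ℝ :=
  (volume.restrict ({0}ᶜ : Set ℝ)).withDensity (fun η₁ => ENNReal.ofReal |η₁|⁻¹)

/-- The measure of the Hilbert space `H_μ = L²(ℝ×ℝ*, μ ⊗ |η₁|⁻¹dη₁)`. -/
noncomputable def Hmeas (μ : Measure ℝ) : Measure (ℝ × ℝ) := μ.prod nuStar

/-- The representation `(π(p)ψ)(η₀,η₁) = e^{i(p₀η₀+p₁η₁)}ψ(η₀, η₁e^{λp₀})`. -/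
noncomputable def piRep (l : ℝ) (p : ℝ × ℝ) (ψ : ℝ × ℝ → ℂ) (η : ℝ × ℝ) : ℂ :=
  Complex.exp (Complex.I * ((p.1 : ℂ) * (η.1 : ℂ) + (p.2 : ℂ) * (η.2 : ℂ))) *
    ψ (η.1, η.2 * Real.exp (l * p.1))

lemma nuStar_eq : nuStar = volume.withDensity (fun x => ENNReal.ofReal |x|⁻¹) := by
  unfold nuStar
  have h : ({0}ᶜ : Set ℝ) =ᵐ[volume] Set.univ := by
    rw [MeasureTheory.ae_eq_univ]; simp
  rw [Measure.restrict_congr_set h, Measure.restrict_univ]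

lemma nuStar_scale (a : ℝ) (ha : a ≠ 0) (F : ℝ → ENNReal) (hF : Measurable F) :
    ∫⁻ x, F (x * a) ∂nuStar = ∫⁻ x, F x ∂nuStar := by
  rw [nuStar_eq,
    lintegral_withDensity_eq_lintegral_mul _ (by fun_prop)
      (show Measurable fun x => F (x * a) by fun_prop),
    lintegral_withDensity_eq_lintegral_mul _ (by fun_prop) hF]
  simp only [Pi.mul_apply]
  have hG : Measurable fun y => ENNReal.ofReal |y|⁻¹ * F y := by fun_prop
  have step1 : ∀ x : ℝ, ENNReal.ofReal |x|⁻¹ * F (x * a)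
      = ENNReal.ofReal |a| * (ENNReal.ofReal |x * a|⁻¹ * F (x * a)) := by
    intro x
    rw [← mul_assoc, ← ENNReal.ofReal_mul (abs_nonneg _)]
    congr 2
    rw [abs_mul, mul_inv]
    field_simp
  simp_rw [step1]
  rw [lintegral_const_mul _
    (show Measurable fun x => ENNReal.ofReal |x * a|⁻¹ * F (x * a) by fun_prop)]
  have step2 : ∫⁻ x, ENNReal.ofReal |x * a|⁻¹ * F (x * a) ∂volume
      = ENNReal.ofReal |a⁻¹| * ∫⁻ y, ENNReal.ofReal |y|⁻¹ * F y ∂volume := by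
    rw [← lintegral_map hG (show Measurable fun x : ℝ => x * a by fun_prop),
      Real.map_volume_mul_right ha, lintegral_smul_measure, smul_eq_mul]
  rw [step2, ← mul_assoc, ← ENNReal.ofReal_mul (abs_nonneg _), abs_inv,
    mul_inv_cancel₀ (abs_ne_zero.2 ha), ENNReal.ofReal_one, one_mul]

instance : SFinite nuStar := by unfold nuStar; infer_instance

/-- Each `π(p)` is a unitary operator on `H_μ` (it preserves the `L²` norm and is
invertible, `π(0,0) = id`), and `π` is a representation of the group `G = (ℝ², ∔)`:
`π(p)π(p') = π(p₀+p'₀, p₁+p'₁e^{λp₀})`. -/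
theorem piRep_unitary_representation (l : ℝ) (μ : Measure ℝ) [SigmaFinite μ] :
    (∀ p : ℝ × ℝ, ∀ ψ : ℝ × ℝ → ℂ, Measurable ψ →
      ∫⁻ η, (‖piRep l p ψ η‖₊ : ENNReal) ^ 2 ∂(Hmeas μ) =
        ∫⁻ η, (‖ψ η‖₊ : ENNReal) ^ 2 ∂(Hmeas μ)) ∧
    (∀ p p' : ℝ × ℝ, ∀ ψ : ℝ × ℝ → ℂ,
      piRep l p (piRep l p' ψ) =
        piRep l (p.1 + p'.1, p.2 + p'.2 * Real.exp (l * p.1)) ψ) ∧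
    (∀ ψ : ℝ × ℝ → ℂ, piRep l ((0 : ℝ), (0 : ℝ)) ψ = ψ) := by
  refine ⟨?_, ?_, ?_⟩
  · intro p ψ hψ
    have hnorm : ∀ η : ℝ × ℝ, (‖piRep l p ψ η‖₊ : ENNReal) ^ 2
        = (‖ψ (η.1, η.2 * Real.exp (l * p.1))‖₊ : ENNReal) ^ 2 := by
      intro η
      have : ‖piRep l p ψ η‖ = ‖ψ (η.1, η.2 * Real.exp (l * p.1))‖ := by
        unfold piRep
        rw [norm_mul, Complex.norm_exp]
        have : (Complex.I * ((p.1 : ℂ) * (η.1 : ℂ) + (p.2 : ℂ) * (η.2 : ℂ))).re = 0 := by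
          simp [Complex.mul_re, Complex.add_re]
        rw [this, Real.exp_zero, one_mul]
      have h2 : ‖piRep l p ψ η‖₊ = ‖ψ (η.1, η.2 * Real.exp (l * p.1))‖₊ :=
        NNReal.coe_injective (by simpa using this)
      rw [h2]
    simp only [hnorm]
    unfold Hmeas
    have hm : Measurable fun η : ℝ × ℝ => (‖ψ η‖₊ : ENNReal) ^ 2 := by fun_prop
    rw [lintegral_prod _ (by fun_prop), lintegral_prod _ hm.aemeasurable]
    congr 1
    ext η₀
    exact nuStar_scale (Real.exp (l * p.1)) (Real.exp_ne_zero _)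
      (fun y => (‖ψ (η₀, y)‖₊ : ENNReal) ^ 2) (by fun_prop)
  · intro p p' ψ
    funext η
    unfold piRep
    simp only
    rw [← mul_assoc, ← Complex.exp_add]
    have h2 : η.2 * Real.exp (l * p.1) * Real.exp (l * p'.1)
        = η.2 * Real.exp (l * (p.1 + p'.1)) := by
      rw [mul_assoc, ← Real.exp_add, mul_add]
    rw [h2]
    congr 1
    push_cast
    ring
  · intro ψ
    funext η
    unfold piRep
    simp
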